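/- arXiv:2510.24489 — 3 statements merged into one kernel-verified Lean document; each statement's English description precedes it below -/
import Mathlib

section
/- Let C : H → H be β⁻¹-cocoercive with respect to S, meaning ⟨Cx − Cy, x − y⟩ ≥ β⁻¹ ‖Cx − Cy‖²_{S⁻¹} for all x, y ∈ H. Then for all x, y, z ∈ H, ⟨Cx − Cy, z − y⟩ ≥ −(β/4)‖z − x‖_S². -/
open RealInnerProductSpace

theorem stmt_4 {H : Type*} [NormedAddCommGroup H] [InnerProductSpace ℝ H] [CompleteSpace H]
    (S Sinv : H →L[ℝ] H)
    (hsa : ∀ x y : H, ⟪S x, y⟫ = ⟪x, S y⟫)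
    (m : ℝ) (hm : 0 < m) (hpos : ∀ x : H, m * ‖x‖ ^ 2 ≤ ⟪S x, x⟫)
    (hinv₁ : ∀ x : H, Sinv (S x) = x) (hinv₂ : ∀ x : H, S (Sinv x) = x)
    (β : ℝ) (hβ : 0 < β) (C : H → H)
    (hcoco : ∀ x y : H, β⁻¹ * ⟪Sinv (C x - C y), C x - C y⟫ ≤ ⟪C x - C y, x - y⟫) :
    ∀ x y z : H, -(β / 4) * ⟪S (z - x), z - x⟫ ≤ ⟪C x - C y, z - y⟫ := by
  intro x y z
  set u := C x - C y with hu
  set w := z - x with hw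
  set a := Sinv u with ha
  have hSa : S a = u := hinv₂ u
  have hnonneg : ∀ v : H, (0:ℝ) ≤ ⟪S v, v⟫ := fun v =>
    le_trans (by positivity) (hpos v)
  have key : (0:ℝ) ≤ ⟪S (a + (β/2) • w), a + (β/2) • w⟫ := hnonneg _
  have expand : ⟪S (a + (β/2) • w), a + (β/2) • w⟫
      = ⟪S a, a⟫ + (β/2) * ⟪S a, w⟫ + (β/2) * ⟪S w, a⟫ + (β/2)^2 * ⟪S w, w⟫ := by
    rw [map_add, map_smul, inner_add_left, inner_add_right, inner_add_right,
      inner_smul_left, inner_smul_right, inner_smul_left, inner_smul_right]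
    simp [RCLike.ofReal_real_eq_id]
    ring
  have hcross : ⟪S w, a⟫ = ⟪S a, w⟫ := by
    rw [hsa w a, real_inner_comm]
  have hSaa : ⟪S a, a⟫ = ⟪Sinv u, u⟫ := by
    rw [hSa, real_inner_comm]
  have hSaw : ⟪S a, w⟫ = ⟪u, w⟫ := by rw [hSa]
  rw [expand, hcross, hSaa, hSaw] at key
  have hc := hcoco x y
  rw [inv_mul_le_iff₀ hβ] at hc
  have hsplit : ⟪u, z - y⟫ = ⟪u, w⟫ + ⟪u, x - y⟫ := by
    rw [← inner_add_right, hw]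
    congr 1
    abel
  rw [hsplit]
  nlinarith [key, hc, hβ]
end

section
/- Let M : H → H be a map such that γM − S is L-Lipschitz continuous with respect to S for some L ∈ [0,1) and γ > 0. Then M is strongly monotone with respect to S: for all x, y ∈ H, ⟨Mx − My, x − y⟩ ≥ ((1 − L)/γ)‖x − y‖_S². -/
open RealInnerProductSpace

private lemma cs_aux {H : Type*} [NormedAddCommGroup H] [InnerProductSpace ℝ H]
    (T : H →L[ℝ] H) (hsym : ∀ x y : H, ⟪T x, y⟫ = ⟪x, T y⟫)
    (hpos : ∀ x : H, 0 ≤ ⟪T x, x⟫) (u v : H) :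
    ⟪T u, v⟫ ^ 2 ≤ ⟪T u, u⟫ * ⟪T v, v⟫ := by
  set a := ⟪T u, u⟫ with ha
  set b := ⟪T u, v⟫ with hb
  set c := ⟪T v, v⟫ with hc
  have hq : ∀ t : ℝ, 0 ≤ a + 2 * t * b + t ^ 2 * c := by
    intro t
    have h := hpos (u + t • v)
    have hexp : ⟪T (u + t • v), u + t • v⟫ = a + 2 * t * b + t ^ 2 * c := by
      have hbv : ⟪T v, u⟫ = b := by rw [hsym, real_inner_comm]
      simp only [map_add, map_smul, inner_add_left, inner_add_right,
        inner_smul_left, inner_smul_right, RCLike.ofReal_real_eq_id, id_eq, conj_trivial,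
        ← ha, ← hb, ← hc, hbv]
      ring
    rw [hexp] at h
    exact h
  have hc0 : 0 ≤ c := hpos v
  rcases eq_or_lt_of_le hc0 with hc' | hc'
  · have hb0 : b = 0 := by
      by_contra hb0
      have h1 := hq (-(a + 1) / (2 * b))
      rw [← hc'] at h1
      have h2 : 2 * (-(a + 1) / (2 * b)) * b = -(a+1) := by
        field_simp
      nlinarith
    rw [hb0, ← hc']
    nlinarith [hpos u]
  · have h := hq (-b / c)
    have hne : c ≠ 0 := ne_of_gt hc'
    have h2 : a + 2 * (-b / c) * b + (-b / c) ^ 2 * c = a - b ^ 2 / c := by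
      field_simp; ring
    rw [h2] at h
    have h3 : b ^ 2 / c ≤ a := by linarith
    exact (div_le_iff₀ hc').mp h3

theorem stmt_7 {H : Type*} [NormedAddCommGroup H] [InnerProductSpace ℝ H] [CompleteSpace H]
    (S Sinv : H →L[ℝ] H)
    (hsa : ∀ x y : H, ⟪S x, y⟫ = ⟪x, S y⟫)
    (m : ℝ) (hm : 0 < m) (hpos : ∀ x : H, m * ‖x‖ ^ 2 ≤ ⟪S x, x⟫)
    (hinv₁ : ∀ x : H, Sinv (S x) = x) (hinv₂ : ∀ x : H, S (Sinv x) = x)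
    (M : H → H) (γ L : ℝ) (hγ : 0 < γ) (hL0 : 0 ≤ L) (hL1 : L < 1)
    (hlip : ∀ x y : H,
      Real.sqrt ⟪Sinv ((γ • M x - S x) - (γ • M y - S y)),
        (γ • M x - S x) - (γ • M y - S y)⟫ ≤ L * Real.sqrt ⟪S (x - y), x - y⟫) :
    ∀ x y : H, ((1 - L) / γ) * ⟪S (x - y), x - y⟫ ≤ ⟪M x - M y, x - y⟫ := by
  intro x y
  -- Sinv is symmetric and positive
  have hsinv_sym : ∀ a b : H, ⟪Sinv a, b⟫ = ⟪a, Sinv b⟫ := by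
    intro a b
    calc ⟪Sinv a, b⟫ = ⟪Sinv a, S (Sinv b)⟫ := by rw [hinv₂]
    _ = ⟪S (Sinv a), Sinv b⟫ := by rw [hsa]
    _ = ⟪a, Sinv b⟫ := by rw [hinv₂]
  have hsinv_pos : ∀ a : H, 0 ≤ ⟪Sinv a, a⟫ := by
    intro a
    have h : ⟪S (Sinv a), Sinv a⟫ = ⟪Sinv a, a⟫ := by
      rw [hinv₂, real_inner_comm]
    rw [← h]
    exact le_trans (by positivity) (hpos (Sinv a))
  have hSpos : ∀ a : H, 0 ≤ ⟪S a, a⟫ := fun a =>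
    le_trans (by positivity) (hpos a)
  set w := x - y with hw
  set u := (γ • M x - S x) - (γ • M y - S y) with hu
  set A := ⟪Sinv u, u⟫ with hA
  set B := ⟪S w, w⟫ with hB
  have hA0 : 0 ≤ A := hsinv_pos u
  have hB0 : 0 ≤ B := hSpos w
  -- from hlip : A ≤ L^2 * B
  have hAB : A ≤ L ^ 2 * B := by
    have h := hlip x y
    have h2 : Real.sqrt A ^ 2 ≤ (L * Real.sqrt B) ^ 2 := by
      apply sq_le_sq' _ h
      have : 0 ≤ L * Real.sqrt B := by positivity
      nlinarith [Real.sqrt_nonneg A]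
    rw [Real.sq_sqrt hA0] at h2
    calc A ≤ (L * Real.sqrt B) ^ 2 := h2
    _ = L ^ 2 * Real.sqrt B ^ 2 := by ring
    _ = L ^ 2 * B := by rw [Real.sq_sqrt hB0]
  -- Cauchy-Schwarz for Sinv: ⟪u, w⟫² ≤ A * B
  have hcs : ⟪u, w⟫ ^ 2 ≤ A * B := by
    have h := cs_aux Sinv hsinv_sym hsinv_pos u (S w)
    have e1 : ⟪Sinv u, S w⟫ = ⟪u, w⟫ := by
      rw [← hsa, hinv₂]
    have e2 : ⟪Sinv (S w), S w⟫ = B := by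
      rw [hinv₁, real_inner_comm, ← hB]
    rw [e1, e2] at h
    exact h
  -- hence ⟪u, w⟫ ≥ -L * B
  have hlow : -(L * B) ≤ ⟪u, w⟫ := by
    have h1 : ⟪u, w⟫ ^ 2 ≤ (L * B) ^ 2 := by
      calc ⟪u, w⟫ ^ 2 ≤ A * B := hcs
      _ ≤ (L ^ 2 * B) * B := by nlinarith
      _ = (L * B) ^ 2 := by ring
    nlinarith [mul_nonneg hL0 hB0]
  -- ⟪u, w⟫ = γ * ⟪M x - M y, w⟫ - B
  have hexp : ⟪u, w⟫ = γ * ⟪M x - M y, w⟫ - B := by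
    have : u = γ • (M x - M y) - S w := by
      rw [hu, hw, smul_sub, map_sub]; abel
    rw [this, inner_sub_left, real_inner_smul_left, hB]
  rw [hexp] at hlow
  rw [div_mul_eq_mul_div, div_le_iff₀ hγ]
  nlinarith
end

section
/- Let p ∈ (0,1), and suppose constants L ≥ 0, α ≥ 0, θ > 0, β > 0, μ ≥ 0 with μ ≤ θ and L + α ≤ (1 − √p)/4, and γ = min{√p/(2θ), p/β, α/(Lθ)} (with the last term interpreted as +∞ if L = 0). Then p − γ²θ² − γβ/2 − p(γLθ + L) − 2γ³θ²μ ≥ p(1 − √p)/4 − (L + α)p ≥ 0. -/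
theorem stmt_19 (p L α θ β μ γ : ℝ)
    (hp0 : 0 < p) (hp1 : p < 1) (hL : 0 ≤ L) (hα : 0 ≤ α) (hθ : 0 < θ) (hβ : 0 < β)
    (hμ0 : 0 ≤ μ) (hμθ : μ ≤ θ) (hLα : L + α ≤ (1 - Real.sqrt p) / 4)
    (hγ : γ = if L = 0 then min (Real.sqrt p / (2 * θ)) (p / β)
      else min (min (Real.sqrt p / (2 * θ)) (p / β)) (α / (L * θ))) :
    p * (1 - Real.sqrt p) / 4 - (L + α) * p ≤
        p - γ ^ 2 * θ ^ 2 - γ * β / 2 - p * (γ * L * θ + L) - 2 * γ ^ 3 * θ ^ 2 * μ ∧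
      0 ≤ p * (1 - Real.sqrt p) / 4 - (L + α) * p := by
  set s := Real.sqrt p with hs
  have hs0 : 0 < s := Real.sqrt_pos.mpr hp0
  have hsp : s ^ 2 = p := Real.sq_sqrt hp0.le
  have hs1 : s < 1 := by
    nlinarith [hsp]
  have hγ1 : γ ≤ s / (2 * θ) := by
    rw [hγ]; split_ifs
    · exact min_le_left _ _
    · exact le_trans (min_le_left _ _) (min_le_left _ _)
  have hγ2 : γ ≤ p / β := by
    rw [hγ]; split_ifs
    · exact min_le_right _ _
    · exact le_trans (min_le_left _ _) (min_le_right _ _)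
  have hγ0 : 0 ≤ γ := by
    rw [hγ]; split_ifs
    · exact le_min (by positivity) (by positivity)
    · refine le_min (le_min (by positivity) (by positivity)) ?_
      have hL' : 0 < L := lt_of_le_of_ne hL (Ne.symm (by assumption))
      positivity
  have hγθ : γ * θ ≤ s / 2 := by
    rw [le_div_iff₀ (by positivity)] at hγ1
    nlinarith [hγ1]
  have hγβ : γ * β ≤ p := by
    calc γ * β ≤ p / β * β := by nlinarith
    _ = p := by field_simp
  have hγL : γ * L * θ ≤ α := by
    rw [hγ]; split_ifs with h
    · simp [h]; positivity
    · have hL' : 0 < L := lt_of_le_of_ne hL (Ne.symm h)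
      have h1 : min (min (s / (2 * θ)) (p / β)) (α / (L * θ)) ≤ α / (L * θ) :=
        min_le_right _ _
      have := mul_le_mul_of_nonneg_right h1 (by positivity : (0:ℝ) ≤ L * θ)
      rw [div_mul_cancel₀ _ (by positivity : (L * θ) ≠ 0)] at this
      nlinarith
  have hcube : (γ * θ) ^ 3 ≤ (s / 2) ^ 3 := by
    apply pow_le_pow_left₀ (by positivity) hγθ
  have hmu : 2 * γ ^ 3 * θ ^ 2 * μ ≤ s ^ 3 / 4 := by
    have h1 : 2 * γ ^ 3 * θ ^ 2 * μ ≤ 2 * (γ * θ) ^ 3 := by nlinarith [mul_nonneg (mul_nonneg (pow_nonneg hγ0 3) (pow_nonneg hθ.le 2)) (sub_nonneg.mpr hμθ)]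
    nlinarith [hcube]
  have hsq : γ ^ 2 * θ ^ 2 ≤ p / 4 := by
    nlinarith [hγθ, mul_nonneg hγ0 hθ.le]
  constructor
  · have hgL : p * (γ * L * θ) ≤ p * α := by nlinarith
    have hmu' : 2 * γ ^ 3 * θ ^ 2 * μ ≤ p * s / 4 := by
      have hs3 : s ^ 3 = p * s := by rw [← hsp]; ring
      linarith [hmu, hs3.le]
    linarith [hγβ, hmu', hsq, hgL]
  · linarith [mul_le_mul_of_nonneg_left hLα hp0.le]
end
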